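/- Fix real λ₁, λ₂ and define F : ℝ² → ℂ by F(x₁,x₂) = ∫_{-∞}^{∞} exp( i·λ₁·t + i·λ₂·(x₁ + x₂ − t) − e^{x₁ − t} − e^{t − x₂} ) dt. Then F satisfies the gl₂ quantum Toda equation: −(1/2)·(∂²F/∂x₁² + ∂²F/∂x₂²) + e^{x₁ − x₂}·F = (1/2)·(λ₁² + λ₂²)·F, for all (x₁,x₂) ∈ ℝ². -/

import Mathlib

open MeasureTheory Complex

section GL2Aux
open Set

noncomputable def gex (l₁ l₂ x₁ x₂ t : ℝ) : ℂ :=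
  I * (l₁ : ℂ) * (t : ℂ) + I * (l₂ : ℂ) * ((x₁ : ℂ) + (x₂ : ℂ) - (t : ℂ)) -
    (Real.exp (x₁ - t) : ℂ) - (Real.exp (t - x₂) : ℂ)

noncomputable def phi (l₁ l₂ x₁ x₂ t : ℝ) : ℂ := Complex.exp (gex l₁ l₂ x₁ x₂ t)

lemma norm_phi (l₁ l₂ x₁ x₂ t : ℝ) :
    ‖phi l₁ l₂ x₁ x₂ t‖ = Real.exp (-(Real.exp (x₁ - t) + Real.exp (t - x₂))) := by
  rw [phi, Complex.norm_exp]
  congr 1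
  simp only [gex, Complex.add_re, Complex.sub_re, Complex.mul_re, Complex.mul_im,
    Complex.I_re, Complex.I_im, Complex.ofReal_re, Complex.ofReal_im, Complex.add_im,
    Complex.sub_im]
  ring

lemma poly_exp_le {s : ℝ} (hs : 0 ≤ s) :
    (1 + s) ^ 2 * Real.exp (-s) ≤ 16 * Real.exp (-(s / 2)) := by
  have h2 : (1 + s) ≤ 4 * Real.exp (s / 4) := by nlinarith [Real.add_one_le_exp (s / 4)]
  have h3 : (1 + s) ^ 2 ≤ 16 * Real.exp (s / 2) := by
    have := pow_le_pow_left₀ (by linarith) h2 2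
    calc (1 + s) ^ 2 ≤ (4 * Real.exp (s / 4)) ^ 2 := this
      _ = 16 * Real.exp (s / 2) := by
          rw [mul_pow, pow_two (Real.exp (s/4)), ← Real.exp_add]; ring_nf
  calc (1 + s) ^ 2 * Real.exp (-s) ≤ 16 * Real.exp (s / 2) * Real.exp (-s) := by
        have := (Real.exp_pos (-s)).le
        exact mul_le_mul_of_nonneg_right h3 this
    _ = 16 * Real.exp (-(s / 2)) := by rw [mul_assoc, ← Real.exp_add]; ring_nf

lemma sum_exp_ge {m x₁ x₂ : ℝ} (h₁ : |x₁| ≤ m) (h₂ : |x₂| ≤ m) (t : ℝ) :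
    |t| - m ≤ Real.exp (x₁ - t) + Real.exp (t - x₂) := by
  rcases le_or_gt 0 t with ht | ht
  · have : t - x₂ + 1 ≤ Real.exp (t - x₂) := by
      nlinarith [Real.add_one_le_exp (t - x₂)]
    have h2 := abs_le.mp h₂
    have := (Real.exp_pos (x₁ - t)).le
    rw [_root_.abs_of_nonneg ht]; linarith
  · have : x₁ - t + 1 ≤ Real.exp (x₁ - t) := by
      nlinarith [Real.add_one_le_exp (x₁ - t)]
    have h1 := abs_le.mp h₁
    have := (Real.exp_pos (t - x₂)).le
    rw [abs_of_neg ht]; linarith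

/-- master bound -/
lemma main_bound {m x₁ x₂ : ℝ} (h₁ : |x₁| ≤ m) (h₂ : |x₂| ≤ m) {C : ℝ} (hC : 0 ≤ C) (t : ℝ)
    {z : ℂ} (hz : ‖z‖ ≤ C * ((1 + (Real.exp (x₁ - t) + Real.exp (t - x₂))) ^ 2 *
      Real.exp (-(Real.exp (x₁ - t) + Real.exp (t - x₂))))) :
    ‖z‖ ≤ C * (16 * Real.exp (m / 2)) * Real.exp (-(|t| / 2)) := by
  set s := Real.exp (x₁ - t) + Real.exp (t - x₂) with hs
  have hs0 : 0 ≤ s := by positivity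
  have k1 : (1 + s) ^ 2 * Real.exp (-s) ≤ 16 * Real.exp (-(s / 2)) := poly_exp_le hs0
  have k2 : |t| - m ≤ s := sum_exp_ge h₁ h₂ t
  have k3 : Real.exp (-(s / 2)) ≤ Real.exp (m / 2) * Real.exp (-(|t| / 2)) := by
    rw [← Real.exp_add]
    exact Real.exp_le_exp.mpr (by linarith)
  calc ‖z‖ ≤ C * ((1 + s) ^ 2 * Real.exp (-s)) := hz
    _ ≤ C * (16 * (Real.exp (m / 2) * Real.exp (-(|t| / 2)))) := by
        refine mul_le_mul_of_nonneg_left (k1.trans ?_) hC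
        exact mul_le_mul_of_nonneg_left k3 (by norm_num)
    _ = C * (16 * Real.exp (m / 2)) * Real.exp (-(|t| / 2)) := by ring

lemma integrable_decay (K : ℝ) : Integrable (fun t : ℝ => K * Real.exp (-(|t| / 2))) := by
  apply Integrable.const_mul
  have hI : IntegrableOn (fun t : ℝ => Real.exp (-(1/2) * |t|)) (Ioi 0) := by
    refine (exp_neg_integrableOn_Ioi 0 (by norm_num : (0:ℝ) < 1/2)).congr_fun ?_ measurableSet_Ioi
    intro x hx
    dsimp only
    rw [_root_.abs_of_nonneg (le_of_lt hx)]
  have h : Integrable (fun t : ℝ => Real.exp (-(1/2) * |t|)) := by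
    rw [← integrableOn_univ, ← @Iio_union_Ici _ _ (0 : ℝ), integrableOn_union,
      integrableOn_Ici_iff_integrableOn_Ioi]
    refine ⟨?_, hI⟩
    rw [← (Measure.measurePreserving_neg (volume : Measure ℝ)).integrableOn_comp_preimage
        (Homeomorph.neg ℝ).measurableEmbedding]
    simp only [Function.comp_def, abs_neg, neg_preimage, neg_Iio, neg_zero]
    exact hI
  convert h using 2 with t
  ring_nf

lemma hasDerivAt_exp_aux (c : ℝ) (t : ℝ) :
    HasDerivAt (fun t : ℝ => ((Real.exp (c - t) : ℝ) : ℂ)) (-(Real.exp (c - t) : ℝ) : ℂ) t := by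
  have h1 : HasDerivAt (fun t : ℝ => c - t) (-1 : ℝ) t := by
    simpa using (hasDerivAt_id t).const_sub c
  have h2 : HasDerivAt (fun t : ℝ => Real.exp (c - t)) (Real.exp (c - t) * (-1)) t :=
    (Real.hasDerivAt_exp (c - t)).comp t h1
  have := h2.ofReal_comp
  simpa using this

lemma hasDerivAt_exp_aux2 (c : ℝ) (t : ℝ) :
    HasDerivAt (fun t : ℝ => ((Real.exp (t - c) : ℝ) : ℂ)) ((Real.exp (t - c) : ℝ) : ℂ) t := by
  have h1 : HasDerivAt (fun t : ℝ => t - c) (1 : ℝ) t := by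
    simpa using (hasDerivAt_id t).sub_const c
  have h2 : HasDerivAt (fun t : ℝ => Real.exp (t - c)) (Real.exp (t - c) * 1) t :=
    (Real.hasDerivAt_exp (t - c)).comp (h₂ := Real.exp) t h1
  have := h2.ofReal_comp
  simpa using this

lemma hasDerivAt_phi_t (l₁ l₂ x₁ x₂ t : ℝ) :
    HasDerivAt (fun t => phi l₁ l₂ x₁ x₂ t)
      ((I * l₁ - I * l₂ + (Real.exp (x₁ - t) : ℝ) - (Real.exp (t - x₂) : ℝ)) *
        phi l₁ l₂ x₁ x₂ t) t := by
  have h1 : HasDerivAt (fun t : ℝ => I * (l₁ : ℂ) * (t : ℂ)) (I * l₁) t := by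
    simpa using ((hasDerivAt_id t).ofReal_comp).const_mul (I * (l₁ : ℂ))
  have h2 : HasDerivAt (fun t : ℝ => I * (l₂ : ℂ) * ((x₁ : ℂ) + (x₂ : ℂ) - (t : ℂ)))
      (-(I * l₂)) t := by
    have : HasDerivAt (fun t : ℝ => (x₁ : ℂ) + (x₂ : ℂ) - (t : ℂ)) (-1) t := by
      simpa using ((hasDerivAt_id t).ofReal_comp).const_sub ((x₁ : ℂ) + (x₂ : ℂ))
    simpa using this.const_mul (I * (l₂ : ℂ))
  have hg : HasDerivAt (fun t => gex l₁ l₂ x₁ x₂ t)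
      (I * l₁ - I * l₂ + (Real.exp (x₁ - t) : ℝ) - (Real.exp (t - x₂) : ℝ)) t := by
    have := ((h1.add h2).sub (hasDerivAt_exp_aux x₁ t)).sub (hasDerivAt_exp_aux2 x₂ t)
    refine this.congr_deriv ?_
    ring
  simpa [phi, mul_comm] using hg.cexp

lemma hasDerivAt_phi_x₁ (l₁ l₂ x₁ x₂ t : ℝ) :
    HasDerivAt (fun x => phi l₁ l₂ x x₂ t)
      ((I * l₂ - (Real.exp (x₁ - t) : ℝ)) * phi l₁ l₂ x₁ x₂ t) x₁ := by
  have h2 : HasDerivAt (fun x : ℝ => I * (l₂ : ℂ) * ((x : ℂ) + (x₂ : ℂ) - (t : ℂ)))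
      (I * l₂) x₁ := by
    have : HasDerivAt (fun x : ℝ => (x : ℂ) + (x₂ : ℂ) - (t : ℂ)) 1 x₁ := by
      simpa using (((hasDerivAt_id x₁).ofReal_comp).add_const ((x₂ : ℂ))).sub_const ((t : ℂ))
    simpa using this.const_mul (I * (l₂ : ℂ))
  have h3 : HasDerivAt (fun x : ℝ => ((Real.exp (x - t) : ℝ) : ℂ))
      ((Real.exp (x₁ - t) : ℝ) : ℂ) x₁ := hasDerivAt_exp_aux2 t x₁
  have hg : HasDerivAt (fun x => gex l₁ l₂ x x₂ t)
      (I * l₂ - (Real.exp (x₁ - t) : ℝ)) x₁ := by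
    have := (((hasDerivAt_const x₁ (I * (l₁ : ℂ) * (t : ℂ))).add h2).sub h3).sub
      (hasDerivAt_const x₁ ((Real.exp (t - x₂) : ℝ) : ℂ))
    refine this.congr_deriv ?_
    ring
  simpa [phi, mul_comm] using hg.cexp

lemma hasDerivAt_phi_x₂ (l₁ l₂ x₁ x₂ t : ℝ) :
    HasDerivAt (fun x => phi l₁ l₂ x₁ x t)
      ((I * l₂ + (Real.exp (t - x₂) : ℝ)) * phi l₁ l₂ x₁ x₂ t) x₂ := by
  have h2 : HasDerivAt (fun x : ℝ => I * (l₂ : ℂ) * ((x₁ : ℂ) + (x : ℂ) - (t : ℂ)))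
      (I * l₂) x₂ := by
    have : HasDerivAt (fun x : ℝ => (x₁ : ℂ) + (x : ℂ) - (t : ℂ)) 1 x₂ := by
      have := ((hasDerivAt_id x₂).ofReal_comp).const_add ((x₁ : ℂ))
      simpa using this.sub_const ((t : ℂ))
    simpa using this.const_mul (I * (l₂ : ℂ))
  have h4 : HasDerivAt (fun x : ℝ => ((Real.exp (t - x) : ℝ) : ℂ))
      (-(Real.exp (t - x₂) : ℝ) : ℂ) x₂ := hasDerivAt_exp_aux t x₂
  have hg : HasDerivAt (fun x => gex l₁ l₂ x₁ x t)
      (I * l₂ + (Real.exp (t - x₂) : ℝ)) x₂ := by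
    have := (((hasDerivAt_const x₂ (I * (l₁ : ℂ) * (t : ℂ))).add h2).sub
      (hasDerivAt_const x₂ ((Real.exp (x₁ - t) : ℝ) : ℂ))).sub h4
    refine this.congr_deriv ?_
    push_cast
    ring
  simpa [phi, mul_comm] using hg.cexp

lemma continuous_phi (l₁ l₂ x₁ x₂ : ℝ) : Continuous (fun t => phi l₁ l₂ x₁ x₂ t) := by
  simp only [phi, gex]
  fun_prop


lemma cnorm_I_mul (r : ℝ) : ‖I * (r : ℂ)‖ = |r| := by
  simp

-- the six estimates, uniform constant C0 = (1+|l₁|+|l₂|)^2+1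
lemma est_lin {l₁ l₂ a b r : ℝ} (ha : 0 ≤ a) (hb : 0 ≤ b)
    (hr : r ≤ 1 + |l₁| + |l₂| + (a + b)) {z : ℂ} (hz : ‖z‖ ≤ r) :
    ‖z‖ ≤ ((1 + |l₁| + |l₂|) ^ 2 + 1) * (1 + (a + b)) ^ 2 := by
  have h1 : (0:ℝ) ≤ |l₁| := abs_nonneg _
  have h2 : (0:ℝ) ≤ |l₂| := abs_nonneg _
  nlinarith [sq_nonneg (a + b), sq_nonneg (1 + |l₁| + |l₂|), mul_nonneg (mul_nonneg h1 h2) ha,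
    mul_nonneg h1 (add_nonneg ha hb), mul_nonneg h2 (add_nonneg ha hb),
    mul_nonneg (add_nonneg ha hb) (add_nonneg ha hb)]

lemma est_quad {l₁ l₂ a b : ℝ} (ha : 0 ≤ a) (hb : 0 ≤ b) {z : ℂ}
    (hz : ‖z‖ ≤ (1 + |l₁| + |l₂| + (a + b)) ^ 2 + (a + b)) :
    ‖z‖ ≤ ((1 + |l₁| + |l₂|) ^ 2 + 1) * (1 + (a + b)) ^ 2 := by
  have h1 : (0:ℝ) ≤ |l₁| := abs_nonneg _
  have h2 : (0:ℝ) ≤ |l₂| := abs_nonneg _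
  have key : (1 + |l₁| + |l₂| + (a + b)) ^ 2 ≤ (1 + |l₁| + |l₂|) ^ 2 * (1 + (a + b)) ^ 2 := by
    have : 1 + |l₁| + |l₂| + (a + b) ≤ (1 + |l₁| + |l₂|) * (1 + (a + b)) := by
      nlinarith [mul_nonneg (add_nonneg h1 h2) (add_nonneg ha hb)]
    calc (1 + |l₁| + |l₂| + (a + b)) ^ 2 ≤ ((1 + |l₁| + |l₂|) * (1 + (a + b))) ^ 2 := by
          apply pow_le_pow_left₀ (by positivity) this
      _ = (1 + |l₁| + |l₂|) ^ 2 * (1 + (a + b)) ^ 2 := by ring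
  have key2 : a + b ≤ (1 + (a + b)) ^ 2 := by nlinarith [sq_nonneg (a + b)]
  refine hz.trans ?_
  have expand : ((1 + |l₁| + |l₂|) ^ 2 + 1) * (1 + (a + b)) ^ 2 =
      (1 + |l₁| + |l₂|) ^ 2 * (1 + (a + b)) ^ 2 + (1 + (a + b)) ^ 2 := by ring
  linarith


lemma integrable_aux (l₁ l₂ x₁ x₂ : ℝ) {q : ℝ → ℂ}
    (hq : AEStronglyMeasurable (fun t => q t * phi l₁ l₂ x₁ x₂ t) volume)
    (hbound : ∀ t, ‖q t‖ ≤ ((1 + |l₁| + |l₂|) ^ 2 + 1) *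
      (1 + (Real.exp (x₁ - t) + Real.exp (t - x₂))) ^ 2) :
    Integrable (fun t => q t * phi l₁ l₂ x₁ x₂ t) := by
  have hC : (0:ℝ) ≤ (1 + |l₁| + |l₂|) ^ 2 + 1 := by positivity
  refine (integrable_decay (((1 + |l₁| + |l₂|) ^ 2 + 1) *
    (16 * Real.exp ((max |x₁| |x₂|) / 2)))).mono' hq ?_
  filter_upwards with t
  refine main_bound (le_max_left _ _) (le_max_right _ _) hC t ?_
  rw [norm_mul, norm_phi]
  calc ‖q t‖ * Real.exp (-(Real.exp (x₁ - t) + Real.exp (t - x₂)))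
      ≤ (((1 + |l₁| + |l₂|) ^ 2 + 1) * (1 + (Real.exp (x₁ - t) + Real.exp (t - x₂))) ^ 2) *
        Real.exp (-(Real.exp (x₁ - t) + Real.exp (t - x₂))) :=
        mul_le_mul_of_nonneg_right (hbound t) (Real.exp_pos _).le
    _ = ((1 + |l₁| + |l₂|) ^ 2 + 1) * ((1 + (Real.exp (x₁ - t) + Real.exp (t - x₂))) ^ 2 *
        Real.exp (-(Real.exp (x₁ - t) + Real.exp (t - x₂)))) := by ring

lemma integrable_phi (l₁ l₂ x₁ x₂ : ℝ) : Integrable (fun t => phi l₁ l₂ x₁ x₂ t) := by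
  have h := integrable_aux l₁ l₂ x₁ x₂ (q := fun _ => (1:ℂ))
    (by simp only [one_mul]; exact (continuous_phi l₁ l₂ x₁ x₂).aestronglyMeasurable)
    (fun t => by
      rw [norm_one]
      have h1 : (0:ℝ) ≤ Real.exp (x₁ - t) + Real.exp (t - x₂) := by positivity
      nlinarith [abs_nonneg l₁, abs_nonneg l₂, sq_nonneg (|l₁| + |l₂|),
        sq_nonneg (Real.exp (x₁ - t) + Real.exp (t - x₂))])
  simpa only [one_mul] using h

lemma norm_exp_c (r : ℝ) : ‖((Real.exp r : ℝ) : ℂ)‖ = Real.exp r := by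
  rw [Complex.norm_real, Real.norm_eq_abs, abs_of_pos (Real.exp_pos r)]

lemma deriv1_x₁ (l₁ l₂ x₂ u : ℝ) :
    Integrable (fun t => (I * (l₂:ℂ) - ((Real.exp (u - t) : ℝ) : ℂ)) * phi l₁ l₂ u x₂ t) ∧
    HasDerivAt (fun x => ∫ t : ℝ, phi l₁ l₂ x x₂ t)
      (∫ t : ℝ, (I * (l₂:ℂ) - ((Real.exp (u - t) : ℝ) : ℂ)) * phi l₁ l₂ u x₂ t) u := by
  have hC : (0:ℝ) ≤ (1 + |l₁| + |l₂|) ^ 2 + 1 := by positivity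
  refine hasDerivAt_integral_of_dominated_loc_of_deriv_le (μ := volume) (s := Metric.ball u 1)
    (F := fun x t => phi l₁ l₂ x x₂ t)
    (F' := fun x t => (I * (l₂:ℂ) - ((Real.exp (x - t) : ℝ) : ℂ)) * phi l₁ l₂ x x₂ t)
    (bound := fun t => ((1 + |l₁| + |l₂|) ^ 2 + 1) *
      (16 * Real.exp ((max |u| |x₂| + 1) / 2)) * Real.exp (-(|t| / 2)))
    (Metric.ball_mem_nhds u one_pos) ?_ ?_ ?_ ?_ ?_ ?_
  · exact Filter.Eventually.of_forall fun x => (continuous_phi l₁ l₂ x x₂).aestronglyMeasurable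
  · exact integrable_phi l₁ l₂ u x₂
  · refine Continuous.aestronglyMeasurable ?_
    simp only [phi, gex]
    fun_prop
  · refine ae_of_all _ fun t x hx => ?_
    have hxm : |x| ≤ max |u| |x₂| + 1 := by
      have h1 : |x| - |u| ≤ |x - u| := abs_sub_abs_le_abs_sub x u
      have h2 : |x - u| < 1 := by rwa [Metric.mem_ball, Real.dist_eq] at hx
      have := le_max_left |u| |x₂|
      linarith
    have hx2 : |x₂| ≤ max |u| |x₂| + 1 := by linarith [le_max_right |u| |x₂|]
    refine main_bound hxm hx2 hC t ?_
    rw [norm_mul, norm_phi]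
    have ha : (0:ℝ) ≤ Real.exp (x - t) := (Real.exp_pos _).le
    have hb : (0:ℝ) ≤ Real.exp (t - x₂) := (Real.exp_pos _).le
    have h5 : ‖I * (l₂:ℂ) - ((Real.exp (x - t) : ℝ) : ℂ)‖ ≤
        ((1 + |l₁| + |l₂|) ^ 2 + 1) * (1 + (Real.exp (x - t) + Real.exp (t - x₂))) ^ 2 := by
      refine est_lin (l₁ := l₁) (l₂ := l₂) ha hb (r := |l₂| + Real.exp (x - t)) ?_ ?_
      · linarith [abs_nonneg l₁]
      · calc ‖I * (l₂:ℂ) - ((Real.exp (x - t) : ℝ) : ℂ)‖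
            ≤ ‖I * (l₂:ℂ)‖ + ‖((Real.exp (x - t) : ℝ) : ℂ)‖ := norm_sub_le _ _
          _ = |l₂| + Real.exp (x - t) := by rw [cnorm_I_mul, norm_exp_c]
    calc ‖I * (l₂:ℂ) - ((Real.exp (x - t) : ℝ) : ℂ)‖ *
          Real.exp (-(Real.exp (x - t) + Real.exp (t - x₂)))
        ≤ (((1 + |l₁| + |l₂|) ^ 2 + 1) * (1 + (Real.exp (x - t) + Real.exp (t - x₂))) ^ 2) *
          Real.exp (-(Real.exp (x - t) + Real.exp (t - x₂))) :=
          mul_le_mul_of_nonneg_right h5 (Real.exp_pos _).le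
      _ = ((1 + |l₁| + |l₂|) ^ 2 + 1) * ((1 + (Real.exp (x - t) + Real.exp (t - x₂))) ^ 2 *
          Real.exp (-(Real.exp (x - t) + Real.exp (t - x₂)))) := by ring
  · exact integrable_decay _
  · exact ae_of_all _ fun t x _ => hasDerivAt_phi_x₁ l₁ l₂ x x₂ t

lemma deriv2_x₁ (l₁ l₂ x₂ u : ℝ) :
    Integrable (fun t => ((I * (l₂:ℂ) - ((Real.exp (u - t) : ℝ) : ℂ)) ^ 2 -
        ((Real.exp (u - t) : ℝ) : ℂ)) * phi l₁ l₂ u x₂ t) ∧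
    HasDerivAt (fun x => ∫ t : ℝ, (I * (l₂:ℂ) - ((Real.exp (x - t) : ℝ) : ℂ)) * phi l₁ l₂ x x₂ t)
      (∫ t : ℝ, ((I * (l₂:ℂ) - ((Real.exp (u - t) : ℝ) : ℂ)) ^ 2 -
        ((Real.exp (u - t) : ℝ) : ℂ)) * phi l₁ l₂ u x₂ t) u := by
  have hC : (0:ℝ) ≤ (1 + |l₁| + |l₂|) ^ 2 + 1 := by positivity
  refine hasDerivAt_integral_of_dominated_loc_of_deriv_le (μ := volume) (s := Metric.ball u 1)
    (F := fun x t => (I * (l₂:ℂ) - ((Real.exp (x - t) : ℝ) : ℂ)) * phi l₁ l₂ x x₂ t)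
    (F' := fun x t => ((I * (l₂:ℂ) - ((Real.exp (x - t) : ℝ) : ℂ)) ^ 2 -
        ((Real.exp (x - t) : ℝ) : ℂ)) * phi l₁ l₂ x x₂ t)
    (bound := fun t => ((1 + |l₁| + |l₂|) ^ 2 + 1) *
      (16 * Real.exp ((max |u| |x₂| + 1) / 2)) * Real.exp (-(|t| / 2)))
    (Metric.ball_mem_nhds u one_pos) ?_ ?_ ?_ ?_ ?_ ?_
  · refine Filter.Eventually.of_forall fun x => Continuous.aestronglyMeasurable ?_
    simp only [phi, gex]; fun_prop
  · exact (deriv1_x₁ l₁ l₂ x₂ u).1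
  · refine Continuous.aestronglyMeasurable ?_
    simp only [phi, gex]; fun_prop
  · refine ae_of_all _ fun t x hx => ?_
    have hxm : |x| ≤ max |u| |x₂| + 1 := by
      have h1 : |x| - |u| ≤ |x - u| := abs_sub_abs_le_abs_sub x u
      have h2 : |x - u| < 1 := by rwa [Metric.mem_ball, Real.dist_eq] at hx
      have := le_max_left |u| |x₂|
      linarith
    have hx2 : |x₂| ≤ max |u| |x₂| + 1 := by linarith [le_max_right |u| |x₂|]
    refine main_bound hxm hx2 hC t ?_
    rw [norm_mul, norm_phi]
    have ha : (0:ℝ) ≤ Real.exp (x - t) := (Real.exp_pos _).le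
    have hb : (0:ℝ) ≤ Real.exp (t - x₂) := (Real.exp_pos _).le
    have hlin : ‖I * (l₂:ℂ) - ((Real.exp (x - t) : ℝ) : ℂ)‖ ≤ |l₂| + Real.exp (x - t) := by
      calc ‖I * (l₂:ℂ) - ((Real.exp (x - t) : ℝ) : ℂ)‖
          ≤ ‖I * (l₂:ℂ)‖ + ‖((Real.exp (x - t) : ℝ) : ℂ)‖ := norm_sub_le _ _
        _ = |l₂| + Real.exp (x - t) := by rw [cnorm_I_mul, norm_exp_c]
    have h5 : ‖(I * (l₂:ℂ) - ((Real.exp (x - t) : ℝ) : ℂ)) ^ 2 - ((Real.exp (x - t) : ℝ) : ℂ)‖ ≤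
        ((1 + |l₁| + |l₂|) ^ 2 + 1) * (1 + (Real.exp (x - t) + Real.exp (t - x₂))) ^ 2 := by
      refine est_quad (l₁ := l₁) (l₂ := l₂) ha hb ?_
      have step1 : ‖(I * (l₂:ℂ) - ((Real.exp (x - t) : ℝ) : ℂ)) ^ 2 -
          ((Real.exp (x - t) : ℝ) : ℂ)‖ ≤
          ‖I * (l₂:ℂ) - ((Real.exp (x - t) : ℝ) : ℂ)‖ ^ 2 + Real.exp (x - t) := by
        calc ‖(I * (l₂:ℂ) - ((Real.exp (x - t) : ℝ) : ℂ)) ^ 2 - ((Real.exp (x - t) : ℝ) : ℂ)‖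
            ≤ ‖(I * (l₂:ℂ) - ((Real.exp (x - t) : ℝ) : ℂ)) ^ 2‖ +
              ‖((Real.exp (x - t) : ℝ) : ℂ)‖ := norm_sub_le _ _
          _ = ‖I * (l₂:ℂ) - ((Real.exp (x - t) : ℝ) : ℂ)‖ ^ 2 + Real.exp (x - t) := by
              rw [norm_pow, norm_exp_c]
      refine step1.trans ?_
      have step2 : ‖I * (l₂:ℂ) - ((Real.exp (x - t) : ℝ) : ℂ)‖ ^ 2 ≤
          (1 + |l₁| + |l₂| + (Real.exp (x - t) + Real.exp (t - x₂))) ^ 2 := by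
        refine pow_le_pow_left₀ (norm_nonneg _) (hlin.trans ?_) 2
        linarith [abs_nonneg l₁]
      linarith
    calc ‖(I * (l₂:ℂ) - ((Real.exp (x - t) : ℝ) : ℂ)) ^ 2 - ((Real.exp (x - t) : ℝ) : ℂ)‖ *
          Real.exp (-(Real.exp (x - t) + Real.exp (t - x₂)))
        ≤ (((1 + |l₁| + |l₂|) ^ 2 + 1) * (1 + (Real.exp (x - t) + Real.exp (t - x₂))) ^ 2) *
          Real.exp (-(Real.exp (x - t) + Real.exp (t - x₂))) :=
          mul_le_mul_of_nonneg_right h5 (Real.exp_pos _).le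
      _ = ((1 + |l₁| + |l₂|) ^ 2 + 1) * ((1 + (Real.exp (x - t) + Real.exp (t - x₂))) ^ 2 *
          Real.exp (-(Real.exp (x - t) + Real.exp (t - x₂)))) := by ring
  · exact integrable_decay _
  · refine ae_of_all _ fun t x _ => ?_
    have hd : HasDerivAt (fun x : ℝ => I * (l₂:ℂ) - ((Real.exp (x - t) : ℝ) : ℂ))
        (-((Real.exp (x - t) : ℝ) : ℂ)) x := by
      simpa using (hasDerivAt_exp_aux2 t x).const_sub (I * (l₂:ℂ))
    have := hd.mul (hasDerivAt_phi_x₁ l₁ l₂ x x₂ t)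
    refine this.congr_deriv ?_
    ring

lemma deriv1_x₂ (l₁ l₂ x₁ u : ℝ) :
    Integrable (fun t => (I * (l₂:ℂ) + ((Real.exp (t - u) : ℝ) : ℂ)) * phi l₁ l₂ x₁ u t) ∧
    HasDerivAt (fun x => ∫ t : ℝ, phi l₁ l₂ x₁ x t)
      (∫ t : ℝ, (I * (l₂:ℂ) + ((Real.exp (t - u) : ℝ) : ℂ)) * phi l₁ l₂ x₁ u t) u := by
  have hC : (0:ℝ) ≤ (1 + |l₁| + |l₂|) ^ 2 + 1 := by positivity
  refine hasDerivAt_integral_of_dominated_loc_of_deriv_le (μ := volume) (s := Metric.ball u 1)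
    (F := fun x t => phi l₁ l₂ x₁ x t)
    (F' := fun x t => (I * (l₂:ℂ) + ((Real.exp (t - x) : ℝ) : ℂ)) * phi l₁ l₂ x₁ x t)
    (bound := fun t => ((1 + |l₁| + |l₂|) ^ 2 + 1) *
      (16 * Real.exp ((max |x₁| |u| + 1) / 2)) * Real.exp (-(|t| / 2)))
    (Metric.ball_mem_nhds u one_pos) ?_ ?_ ?_ ?_ ?_ ?_
  · exact Filter.Eventually.of_forall fun x => (continuous_phi l₁ l₂ x₁ x).aestronglyMeasurable
  · exact integrable_phi l₁ l₂ x₁ u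
  · refine Continuous.aestronglyMeasurable ?_
    simp only [phi, gex]; fun_prop
  · refine ae_of_all _ fun t x hx => ?_
    have hxm : |x| ≤ max |x₁| |u| + 1 := by
      have h1 : |x| - |u| ≤ |x - u| := abs_sub_abs_le_abs_sub x u
      have h2 : |x - u| < 1 := by rwa [Metric.mem_ball, Real.dist_eq] at hx
      have := le_max_right |x₁| |u|
      linarith
    have hx1 : |x₁| ≤ max |x₁| |u| + 1 := by linarith [le_max_left |x₁| |u|]
    refine main_bound hx1 hxm hC t ?_
    rw [norm_mul, norm_phi]
    have ha : (0:ℝ) ≤ Real.exp (x₁ - t) := (Real.exp_pos _).le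
    have hb : (0:ℝ) ≤ Real.exp (t - x) := (Real.exp_pos _).le
    have h5 : ‖I * (l₂:ℂ) + ((Real.exp (t - x) : ℝ) : ℂ)‖ ≤
        ((1 + |l₁| + |l₂|) ^ 2 + 1) * (1 + (Real.exp (x₁ - t) + Real.exp (t - x))) ^ 2 := by
      refine est_lin (l₁ := l₁) (l₂ := l₂) ha hb (r := |l₂| + Real.exp (t - x)) ?_ ?_
      · linarith [abs_nonneg l₁]
      · calc ‖I * (l₂:ℂ) + ((Real.exp (t - x) : ℝ) : ℂ)‖
            ≤ ‖I * (l₂:ℂ)‖ + ‖((Real.exp (t - x) : ℝ) : ℂ)‖ := norm_add_le _ _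
          _ = |l₂| + Real.exp (t - x) := by rw [cnorm_I_mul, norm_exp_c]
    calc ‖I * (l₂:ℂ) + ((Real.exp (t - x) : ℝ) : ℂ)‖ *
          Real.exp (-(Real.exp (x₁ - t) + Real.exp (t - x)))
        ≤ (((1 + |l₁| + |l₂|) ^ 2 + 1) * (1 + (Real.exp (x₁ - t) + Real.exp (t - x))) ^ 2) *
          Real.exp (-(Real.exp (x₁ - t) + Real.exp (t - x))) :=
          mul_le_mul_of_nonneg_right h5 (Real.exp_pos _).le
      _ = ((1 + |l₁| + |l₂|) ^ 2 + 1) * ((1 + (Real.exp (x₁ - t) + Real.exp (t - x))) ^ 2 *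
          Real.exp (-(Real.exp (x₁ - t) + Real.exp (t - x)))) := by ring
  · exact integrable_decay _
  · exact ae_of_all _ fun t x _ => hasDerivAt_phi_x₂ l₁ l₂ x₁ x t

lemma deriv2_x₂ (l₁ l₂ x₁ u : ℝ) :
    Integrable (fun t => ((I * (l₂:ℂ) + ((Real.exp (t - u) : ℝ) : ℂ)) ^ 2 -
        ((Real.exp (t - u) : ℝ) : ℂ)) * phi l₁ l₂ x₁ u t) ∧
    HasDerivAt (fun x => ∫ t : ℝ, (I * (l₂:ℂ) + ((Real.exp (t - x) : ℝ) : ℂ)) * phi l₁ l₂ x₁ x t)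
      (∫ t : ℝ, ((I * (l₂:ℂ) + ((Real.exp (t - u) : ℝ) : ℂ)) ^ 2 -
        ((Real.exp (t - u) : ℝ) : ℂ)) * phi l₁ l₂ x₁ u t) u := by
  have hC : (0:ℝ) ≤ (1 + |l₁| + |l₂|) ^ 2 + 1 := by positivity
  refine hasDerivAt_integral_of_dominated_loc_of_deriv_le (μ := volume) (s := Metric.ball u 1)
    (F := fun x t => (I * (l₂:ℂ) + ((Real.exp (t - x) : ℝ) : ℂ)) * phi l₁ l₂ x₁ x t)
    (F' := fun x t => ((I * (l₂:ℂ) + ((Real.exp (t - x) : ℝ) : ℂ)) ^ 2 -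
        ((Real.exp (t - x) : ℝ) : ℂ)) * phi l₁ l₂ x₁ x t)
    (bound := fun t => ((1 + |l₁| + |l₂|) ^ 2 + 1) *
      (16 * Real.exp ((max |x₁| |u| + 1) / 2)) * Real.exp (-(|t| / 2)))
    (Metric.ball_mem_nhds u one_pos) ?_ ?_ ?_ ?_ ?_ ?_
  · refine Filter.Eventually.of_forall fun x => Continuous.aestronglyMeasurable ?_
    simp only [phi, gex]; fun_prop
  · exact (deriv1_x₂ l₁ l₂ x₁ u).1
  · refine Continuous.aestronglyMeasurable ?_
    simp only [phi, gex]; fun_prop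
  · refine ae_of_all _ fun t x hx => ?_
    have hxm : |x| ≤ max |x₁| |u| + 1 := by
      have h1 : |x| - |u| ≤ |x - u| := abs_sub_abs_le_abs_sub x u
      have h2 : |x - u| < 1 := by rwa [Metric.mem_ball, Real.dist_eq] at hx
      have := le_max_right |x₁| |u|
      linarith
    have hx1 : |x₁| ≤ max |x₁| |u| + 1 := by linarith [le_max_left |x₁| |u|]
    refine main_bound hx1 hxm hC t ?_
    rw [norm_mul, norm_phi]
    have ha : (0:ℝ) ≤ Real.exp (x₁ - t) := (Real.exp_pos _).le
    have hb : (0:ℝ) ≤ Real.exp (t - x) := (Real.exp_pos _).le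
    have hlin : ‖I * (l₂:ℂ) + ((Real.exp (t - x) : ℝ) : ℂ)‖ ≤ |l₂| + Real.exp (t - x) := by
      calc ‖I * (l₂:ℂ) + ((Real.exp (t - x) : ℝ) : ℂ)‖
          ≤ ‖I * (l₂:ℂ)‖ + ‖((Real.exp (t - x) : ℝ) : ℂ)‖ := norm_add_le _ _
        _ = |l₂| + Real.exp (t - x) := by rw [cnorm_I_mul, norm_exp_c]
    have h5 : ‖(I * (l₂:ℂ) + ((Real.exp (t - x) : ℝ) : ℂ)) ^ 2 - ((Real.exp (t - x) : ℝ) : ℂ)‖ ≤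
        ((1 + |l₁| + |l₂|) ^ 2 + 1) * (1 + (Real.exp (x₁ - t) + Real.exp (t - x))) ^ 2 := by
      refine est_quad (l₁ := l₁) (l₂ := l₂) ha hb ?_
      have step1 : ‖(I * (l₂:ℂ) + ((Real.exp (t - x) : ℝ) : ℂ)) ^ 2 -
          ((Real.exp (t - x) : ℝ) : ℂ)‖ ≤
          ‖I * (l₂:ℂ) + ((Real.exp (t - x) : ℝ) : ℂ)‖ ^ 2 + Real.exp (t - x) := by
        calc ‖(I * (l₂:ℂ) + ((Real.exp (t - x) : ℝ) : ℂ)) ^ 2 - ((Real.exp (t - x) : ℝ) : ℂ)‖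
            ≤ ‖(I * (l₂:ℂ) + ((Real.exp (t - x) : ℝ) : ℂ)) ^ 2‖ +
              ‖((Real.exp (t - x) : ℝ) : ℂ)‖ := norm_sub_le _ _
          _ = ‖I * (l₂:ℂ) + ((Real.exp (t - x) : ℝ) : ℂ)‖ ^ 2 + Real.exp (t - x) := by
              rw [norm_pow, norm_exp_c]
      refine step1.trans ?_
      have step2 : ‖I * (l₂:ℂ) + ((Real.exp (t - x) : ℝ) : ℂ)‖ ^ 2 ≤
          (1 + |l₁| + |l₂| + (Real.exp (x₁ - t) + Real.exp (t - x))) ^ 2 := by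
        refine pow_le_pow_left₀ (norm_nonneg _) (hlin.trans ?_) 2
        linarith [abs_nonneg l₁]
      linarith
    calc ‖(I * (l₂:ℂ) + ((Real.exp (t - x) : ℝ) : ℂ)) ^ 2 - ((Real.exp (t - x) : ℝ) : ℂ)‖ *
          Real.exp (-(Real.exp (x₁ - t) + Real.exp (t - x)))
        ≤ (((1 + |l₁| + |l₂|) ^ 2 + 1) * (1 + (Real.exp (x₁ - t) + Real.exp (t - x))) ^ 2) *
          Real.exp (-(Real.exp (x₁ - t) + Real.exp (t - x))) :=
          mul_le_mul_of_nonneg_right h5 (Real.exp_pos _).le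
      _ = ((1 + |l₁| + |l₂|) ^ 2 + 1) * ((1 + (Real.exp (x₁ - t) + Real.exp (t - x))) ^ 2 *
          Real.exp (-(Real.exp (x₁ - t) + Real.exp (t - x)))) := by ring
  · exact integrable_decay _
  · refine ae_of_all _ fun t x _ => ?_
    have hd : HasDerivAt (fun x : ℝ => I * (l₂:ℂ) + ((Real.exp (t - x) : ℝ) : ℂ))
        (-((Real.exp (t - x) : ℝ) : ℂ)) x := by
      simpa using (hasDerivAt_exp_aux t x).const_add (I * (l₂:ℂ))
    have := hd.mul (hasDerivAt_phi_x₂ l₁ l₂ x₁ x t)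
    refine this.congr_deriv ?_
    ring

lemma integrable_c_phi (l₁ l₂ x₁ x₂ : ℝ) :
    Integrable (fun t => (I * (l₁:ℂ) - I * (l₂:ℂ) + ((Real.exp (x₁ - t) : ℝ) : ℂ) -
      ((Real.exp (t - x₂) : ℝ) : ℂ)) * phi l₁ l₂ x₁ x₂ t) := by
  refine integrable_aux l₁ l₂ x₁ x₂ ?_ ?_
  · refine Continuous.aestronglyMeasurable ?_
    simp only [phi, gex]; fun_prop
  · intro t
    have ha : (0:ℝ) ≤ Real.exp (x₁ - t) := (Real.exp_pos _).le
    have hb : (0:ℝ) ≤ Real.exp (t - x₂) := (Real.exp_pos _).le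
    refine est_lin (l₁ := l₁) (l₂ := l₂) ha hb
      (r := |l₁| + |l₂| + Real.exp (x₁ - t) + Real.exp (t - x₂)) (by linarith) ?_
    calc ‖I * (l₁:ℂ) - I * (l₂:ℂ) + ((Real.exp (x₁ - t) : ℝ) : ℂ) -
          ((Real.exp (t - x₂) : ℝ) : ℂ)‖
        ≤ ‖I * (l₁:ℂ) - I * (l₂:ℂ) + ((Real.exp (x₁ - t) : ℝ) : ℂ)‖ +
          ‖((Real.exp (t - x₂) : ℝ) : ℂ)‖ := norm_sub_le _ _
      _ ≤ (‖I * (l₁:ℂ) - I * (l₂:ℂ)‖ + ‖((Real.exp (x₁ - t) : ℝ) : ℂ)‖) +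
          ‖((Real.exp (t - x₂) : ℝ) : ℂ)‖ := by
          gcongr
          exact norm_add_le _ _
      _ ≤ ((‖I * (l₁:ℂ)‖ + ‖I * (l₂:ℂ)‖) + ‖((Real.exp (x₁ - t) : ℝ) : ℂ)‖) +
          ‖((Real.exp (t - x₂) : ℝ) : ℂ)‖ := by
          gcongr
          exact norm_sub_le _ _
      _ = |l₁| + |l₂| + Real.exp (x₁ - t) + Real.exp (t - x₂) := by
          rw [cnorm_I_mul, cnorm_I_mul, norm_exp_c, norm_exp_c]

lemma norm_c_le (l₁ l₂ x₁ x₂ t : ℝ) :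
    ‖I * (l₁:ℂ) - I * (l₂:ℂ) + ((Real.exp (x₁ - t) : ℝ) : ℂ) -
      ((Real.exp (t - x₂) : ℝ) : ℂ)‖ ≤ |l₁| + |l₂| + Real.exp (x₁ - t) + Real.exp (t - x₂) := by
  calc ‖I * (l₁:ℂ) - I * (l₂:ℂ) + ((Real.exp (x₁ - t) : ℝ) : ℂ) -
        ((Real.exp (t - x₂) : ℝ) : ℂ)‖
      ≤ ‖I * (l₁:ℂ) - I * (l₂:ℂ) + ((Real.exp (x₁ - t) : ℝ) : ℂ)‖ +
        ‖((Real.exp (t - x₂) : ℝ) : ℂ)‖ := norm_sub_le _ _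
    _ ≤ (‖I * (l₁:ℂ) - I * (l₂:ℂ)‖ + ‖((Real.exp (x₁ - t) : ℝ) : ℂ)‖) +
        ‖((Real.exp (t - x₂) : ℝ) : ℂ)‖ := by
        gcongr
        exact norm_add_le _ _
    _ ≤ ((‖I * (l₁:ℂ)‖ + ‖I * (l₂:ℂ)‖) + ‖((Real.exp (x₁ - t) : ℝ) : ℂ)‖) +
        ‖((Real.exp (t - x₂) : ℝ) : ℂ)‖ := by
        gcongr
        exact norm_sub_le _ _
    _ = |l₁| + |l₂| + Real.exp (x₁ - t) + Real.exp (t - x₂) := by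
        rw [cnorm_I_mul, cnorm_I_mul, norm_exp_c, norm_exp_c]

lemma integrable_c2_phi (l₁ l₂ x₁ x₂ : ℝ) :
    Integrable (fun t => ((I * (l₁:ℂ) - I * (l₂:ℂ) + ((Real.exp (x₁ - t) : ℝ) : ℂ) -
      ((Real.exp (t - x₂) : ℝ) : ℂ)) ^ 2 - ((Real.exp (x₁ - t) : ℝ) : ℂ) -
      ((Real.exp (t - x₂) : ℝ) : ℂ)) * phi l₁ l₂ x₁ x₂ t) := by
  refine integrable_aux l₁ l₂ x₁ x₂ ?_ ?_
  · refine Continuous.aestronglyMeasurable ?_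
    simp only [phi, gex]; fun_prop
  · intro t
    have ha : (0:ℝ) ≤ Real.exp (x₁ - t) := (Real.exp_pos _).le
    have hb : (0:ℝ) ≤ Real.exp (t - x₂) := (Real.exp_pos _).le
    refine est_quad (l₁ := l₁) (l₂ := l₂) ha hb ?_
    have step1 : ‖(I * (l₁:ℂ) - I * (l₂:ℂ) + ((Real.exp (x₁ - t) : ℝ) : ℂ) -
        ((Real.exp (t - x₂) : ℝ) : ℂ)) ^ 2 - ((Real.exp (x₁ - t) : ℝ) : ℂ) -
        ((Real.exp (t - x₂) : ℝ) : ℂ)‖ ≤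
        ‖I * (l₁:ℂ) - I * (l₂:ℂ) + ((Real.exp (x₁ - t) : ℝ) : ℂ) -
        ((Real.exp (t - x₂) : ℝ) : ℂ)‖ ^ 2 + Real.exp (x₁ - t) + Real.exp (t - x₂) := by
      calc ‖(I * (l₁:ℂ) - I * (l₂:ℂ) + ((Real.exp (x₁ - t) : ℝ) : ℂ) -
            ((Real.exp (t - x₂) : ℝ) : ℂ)) ^ 2 - ((Real.exp (x₁ - t) : ℝ) : ℂ) -
            ((Real.exp (t - x₂) : ℝ) : ℂ)‖
          ≤ ‖(I * (l₁:ℂ) - I * (l₂:ℂ) + ((Real.exp (x₁ - t) : ℝ) : ℂ) -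
            ((Real.exp (t - x₂) : ℝ) : ℂ)) ^ 2 - ((Real.exp (x₁ - t) : ℝ) : ℂ)‖ +
            ‖((Real.exp (t - x₂) : ℝ) : ℂ)‖ := norm_sub_le _ _
        _ ≤ (‖(I * (l₁:ℂ) - I * (l₂:ℂ) + ((Real.exp (x₁ - t) : ℝ) : ℂ) -
            ((Real.exp (t - x₂) : ℝ) : ℂ)) ^ 2‖ + ‖((Real.exp (x₁ - t) : ℝ) : ℂ)‖) +
            ‖((Real.exp (t - x₂) : ℝ) : ℂ)‖ := by
            gcongr
            exact norm_sub_le _ _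
        _ = ‖I * (l₁:ℂ) - I * (l₂:ℂ) + ((Real.exp (x₁ - t) : ℝ) : ℂ) -
            ((Real.exp (t - x₂) : ℝ) : ℂ)‖ ^ 2 + Real.exp (x₁ - t) + Real.exp (t - x₂) := by
            rw [norm_pow, norm_exp_c, norm_exp_c]
    refine step1.trans ?_
    have step2 : ‖I * (l₁:ℂ) - I * (l₂:ℂ) + ((Real.exp (x₁ - t) : ℝ) : ℂ) -
        ((Real.exp (t - x₂) : ℝ) : ℂ)‖ ^ 2 ≤
        (1 + |l₁| + |l₂| + (Real.exp (x₁ - t) + Real.exp (t - x₂))) ^ 2 := by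
      refine pow_le_pow_left₀ (norm_nonneg _) ((norm_c_le l₁ l₂ x₁ x₂ t).trans (by linarith)) 2
    linarith

lemma int_dphi_zero (l₁ l₂ x₁ x₂ : ℝ) :
    ∫ t : ℝ, (I * (l₁:ℂ) - I * (l₂:ℂ) + ((Real.exp (x₁ - t) : ℝ) : ℂ) -
      ((Real.exp (t - x₂) : ℝ) : ℂ)) * phi l₁ l₂ x₁ x₂ t = 0 :=
  integral_eq_zero_of_hasDerivAt_of_integrable
    (fun t => hasDerivAt_phi_t l₁ l₂ x₁ x₂ t)
    (integrable_c_phi l₁ l₂ x₁ x₂) (integrable_phi l₁ l₂ x₁ x₂)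

lemma int_d2phi_zero (l₁ l₂ x₁ x₂ : ℝ) :
    ∫ t : ℝ, ((I * (l₁:ℂ) - I * (l₂:ℂ) + ((Real.exp (x₁ - t) : ℝ) : ℂ) -
      ((Real.exp (t - x₂) : ℝ) : ℂ)) ^ 2 - ((Real.exp (x₁ - t) : ℝ) : ℂ) -
      ((Real.exp (t - x₂) : ℝ) : ℂ)) * phi l₁ l₂ x₁ x₂ t = 0 := by
  refine integral_eq_zero_of_hasDerivAt_of_integrable (f := fun t =>
      (I * (l₁:ℂ) - I * (l₂:ℂ) + ((Real.exp (x₁ - t) : ℝ) : ℂ) -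
      ((Real.exp (t - x₂) : ℝ) : ℂ)) * phi l₁ l₂ x₁ x₂ t)
    (fun t => ?_) (integrable_c2_phi l₁ l₂ x₁ x₂) (integrable_c_phi l₁ l₂ x₁ x₂)
  have hdc : HasDerivAt (fun t : ℝ => I * (l₁:ℂ) - I * (l₂:ℂ) + ((Real.exp (x₁ - t) : ℝ) : ℂ) -
      ((Real.exp (t - x₂) : ℝ) : ℂ))
      (-((Real.exp (x₁ - t) : ℝ) : ℂ) - ((Real.exp (t - x₂) : ℝ) : ℂ)) t := by
    have := ((hasDerivAt_exp_aux x₁ t).const_add (I * (l₁:ℂ) - I * (l₂:ℂ))).sub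
      (hasDerivAt_exp_aux2 x₂ t)
    exact this
  have := hdc.mul (hasDerivAt_phi_t l₁ l₂ x₁ x₂ t)
  refine this.congr_deriv ?_
  ring


end GL2Aux

/-- The Givental integral representation of the `gl₂`-Whittaker function is an
eigenfunction of the quadratic Toda Hamiltonian
`H̃₂ = −(1/2)(∂²_{x₁} + ∂²_{x₂}) + e^{x₁−x₂}` with eigenvalue `(λ₁² + λ₂²)/2`. -/
theorem gl2_whittaker_toda_equation (lam₁ lam₂ : ℝ) (F : ℝ → ℝ → ℂ)
    (hF : ∀ x₁ x₂ : ℝ, F x₁ x₂ =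
      ∫ t : ℝ, Complex.exp (I * (lam₁ : ℂ) * (t : ℂ) +
        I * (lam₂ : ℂ) * ((x₁ : ℂ) + (x₂ : ℂ) - (t : ℂ)) -
        Real.exp (x₁ - t) - Real.exp (t - x₂))) :
    ∀ x₁ x₂ : ℝ,
      -(1 / 2 : ℂ) * (deriv (fun u : ℝ => deriv (fun v : ℝ => F v x₂) u) x₁ +
          deriv (fun u : ℝ => deriv (fun v : ℝ => F x₁ v) u) x₂) +
        (Real.exp (x₁ - x₂) : ℂ) * F x₁ x₂ =
      (1 / 2 : ℂ) * ((lam₁ : ℂ) ^ 2 + (lam₂ : ℂ) ^ 2) * F x₁ x₂ := by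
  intro x₁ x₂
  have hFeq : ∀ v w : ℝ, F v w = ∫ t : ℝ, phi lam₁ lam₂ v w t := fun v w => by
    rw [hF v w]; rfl
  have h1 : deriv (fun u : ℝ => deriv (fun v : ℝ => F v x₂) u) x₁ =
      ∫ t : ℝ, ((I * (lam₂:ℂ) - ((Real.exp (x₁ - t) : ℝ) : ℂ)) ^ 2 -
        ((Real.exp (x₁ - t) : ℝ) : ℂ)) * phi lam₁ lam₂ x₁ x₂ t := by
    have e1 : (fun u : ℝ => deriv (fun v : ℝ => F v x₂) u) =
        fun u : ℝ => ∫ t : ℝ, (I * (lam₂:ℂ) - ((Real.exp (u - t) : ℝ) : ℂ)) *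
          phi lam₁ lam₂ u x₂ t := by
      funext u
      have e2 : (fun v : ℝ => F v x₂) = fun v : ℝ => ∫ t : ℝ, phi lam₁ lam₂ v x₂ t :=
        funext fun v => hFeq v x₂
      rw [e2]
      exact ((deriv1_x₁ lam₁ lam₂ x₂ u).2).deriv
    rw [e1]
    exact ((deriv2_x₁ lam₁ lam₂ x₂ x₁).2).deriv
  have h2 : deriv (fun u : ℝ => deriv (fun v : ℝ => F x₁ v) u) x₂ =
      ∫ t : ℝ, ((I * (lam₂:ℂ) + ((Real.exp (t - x₂) : ℝ) : ℂ)) ^ 2 -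
        ((Real.exp (t - x₂) : ℝ) : ℂ)) * phi lam₁ lam₂ x₁ x₂ t := by
    have e1 : (fun u : ℝ => deriv (fun v : ℝ => F x₁ v) u) =
        fun u : ℝ => ∫ t : ℝ, (I * (lam₂:ℂ) + ((Real.exp (t - u) : ℝ) : ℂ)) *
          phi lam₁ lam₂ x₁ u t := by
      funext u
      have e2 : (fun v : ℝ => F x₁ v) = fun v : ℝ => ∫ t : ℝ, phi lam₁ lam₂ x₁ v t :=
        funext fun v => hFeq x₁ v
      rw [e2]
      exact ((deriv1_x₂ lam₁ lam₂ x₁ u).2).deriv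
    rw [e1]
    exact ((deriv2_x₂ lam₁ lam₂ x₁ x₂).2).deriv
  rw [h1, h2, hFeq x₁ x₂]
  have hintP1 := (deriv2_x₁ lam₁ lam₂ x₂ x₁).1
  have hintP2 := (deriv2_x₂ lam₁ lam₂ x₁ x₂).1
  have hint0 := integrable_phi lam₁ lam₂ x₁ x₂
  have hz1 := int_dphi_zero lam₁ lam₂ x₁ x₂
  have hz2 := int_d2phi_zero lam₁ lam₂ x₁ x₂
  have hintc := integrable_c_phi lam₁ lam₂ x₁ x₂
  have hintc2 := integrable_c2_phi lam₁ lam₂ x₁ x₂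
  have key :
      (-(1/2:ℂ)) * (∫ t : ℝ, ((I * (lam₂:ℂ) - ((Real.exp (x₁ - t) : ℝ) : ℂ)) ^ 2 -
          ((Real.exp (x₁ - t) : ℝ) : ℂ)) * phi lam₁ lam₂ x₁ x₂ t) +
        (-(1/2:ℂ)) * (∫ t : ℝ, ((I * (lam₂:ℂ) + ((Real.exp (t - x₂) : ℝ) : ℂ)) ^ 2 -
          ((Real.exp (t - x₂) : ℝ) : ℂ)) * phi lam₁ lam₂ x₁ x₂ t) +
        (((Real.exp (x₁ - x₂) : ℝ) : ℂ) - (1/2:ℂ) * ((lam₁:ℂ)^2 + (lam₂:ℂ)^2)) *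
          (∫ t : ℝ, phi lam₁ lam₂ x₁ x₂ t) = 0 := by
    have comb1 : ∫ t : ℝ, ((-(1/2:ℂ)) * (((I * (lam₂:ℂ) - ((Real.exp (x₁ - t) : ℝ) : ℂ)) ^ 2 -
          ((Real.exp (x₁ - t) : ℝ) : ℂ)) * phi lam₁ lam₂ x₁ x₂ t) +
        (-(1/2:ℂ)) * (((I * (lam₂:ℂ) + ((Real.exp (t - x₂) : ℝ) : ℂ)) ^ 2 -
          ((Real.exp (t - x₂) : ℝ) : ℂ)) * phi lam₁ lam₂ x₁ x₂ t) +
        (((Real.exp (x₁ - x₂) : ℝ) : ℂ) - (1/2:ℂ) * ((lam₁:ℂ)^2 + (lam₂:ℂ)^2)) *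
          phi lam₁ lam₂ x₁ x₂ t) =
        (-(1/2:ℂ)) * (∫ t : ℝ, ((I * (lam₂:ℂ) - ((Real.exp (x₁ - t) : ℝ) : ℂ)) ^ 2 -
          ((Real.exp (x₁ - t) : ℝ) : ℂ)) * phi lam₁ lam₂ x₁ x₂ t) +
        (-(1/2:ℂ)) * (∫ t : ℝ, ((I * (lam₂:ℂ) + ((Real.exp (t - x₂) : ℝ) : ℂ)) ^ 2 -
          ((Real.exp (t - x₂) : ℝ) : ℂ)) * phi lam₁ lam₂ x₁ x₂ t) +
        (((Real.exp (x₁ - x₂) : ℝ) : ℂ) - (1/2:ℂ) * ((lam₁:ℂ)^2 + (lam₂:ℂ)^2)) *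
          (∫ t : ℝ, phi lam₁ lam₂ x₁ x₂ t) := by
      have hA : Integrable (fun t : ℝ => (-(1/2:ℂ)) *
          (((I * (lam₂:ℂ) - ((Real.exp (x₁ - t) : ℝ) : ℂ)) ^ 2 -
          ((Real.exp (x₁ - t) : ℝ) : ℂ)) * phi lam₁ lam₂ x₁ x₂ t)) := hintP1.const_mul _
      have hB : Integrable (fun t : ℝ => (-(1/2:ℂ)) *
          (((I * (lam₂:ℂ) + ((Real.exp (t - x₂) : ℝ) : ℂ)) ^ 2 -
          ((Real.exp (t - x₂) : ℝ) : ℂ)) * phi lam₁ lam₂ x₁ x₂ t)) := hintP2.const_mul _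
      have hCc : Integrable (fun t : ℝ =>
          (((Real.exp (x₁ - x₂) : ℝ) : ℂ) - (1/2:ℂ) * ((lam₁:ℂ)^2 + (lam₂:ℂ)^2)) *
          phi lam₁ lam₂ x₁ x₂ t) := hint0.const_mul _
      have hAB : Integrable (fun t : ℝ => (-(1/2:ℂ)) *
          (((I * (lam₂:ℂ) - ((Real.exp (x₁ - t) : ℝ) : ℂ)) ^ 2 -
          ((Real.exp (x₁ - t) : ℝ) : ℂ)) * phi lam₁ lam₂ x₁ x₂ t) +
          (-(1/2:ℂ)) * (((I * (lam₂:ℂ) + ((Real.exp (t - x₂) : ℝ) : ℂ)) ^ 2 -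
          ((Real.exp (t - x₂) : ℝ) : ℂ)) * phi lam₁ lam₂ x₁ x₂ t)) := hA.add hB
      rw [integral_add hAB hCc, integral_add hA hB,
          integral_const_mul, integral_const_mul, integral_const_mul]
    rw [← comb1]
    have congrstep : ∀ t : ℝ, (-(1/2:ℂ)) * (((I * (lam₂:ℂ) - ((Real.exp (x₁ - t) : ℝ) : ℂ)) ^ 2 -
          ((Real.exp (x₁ - t) : ℝ) : ℂ)) * phi lam₁ lam₂ x₁ x₂ t) +
        (-(1/2:ℂ)) * (((I * (lam₂:ℂ) + ((Real.exp (t - x₂) : ℝ) : ℂ)) ^ 2 -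
          ((Real.exp (t - x₂) : ℝ) : ℂ)) * phi lam₁ lam₂ x₁ x₂ t) +
        (((Real.exp (x₁ - x₂) : ℝ) : ℂ) - (1/2:ℂ) * ((lam₁:ℂ)^2 + (lam₂:ℂ)^2)) *
          phi lam₁ lam₂ x₁ x₂ t =
        (-(1/2:ℂ)) * (((I * (lam₁:ℂ) - I * (lam₂:ℂ) + ((Real.exp (x₁ - t) : ℝ) : ℂ) -
          ((Real.exp (t - x₂) : ℝ) : ℂ)) ^ 2 - ((Real.exp (x₁ - t) : ℝ) : ℂ) -
          ((Real.exp (t - x₂) : ℝ) : ℂ)) * phi lam₁ lam₂ x₁ x₂ t) +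
        (I * (lam₁:ℂ)) * ((I * (lam₁:ℂ) - I * (lam₂:ℂ) + ((Real.exp (x₁ - t) : ℝ) : ℂ) -
          ((Real.exp (t - x₂) : ℝ) : ℂ)) * phi lam₁ lam₂ x₁ x₂ t) := by
      intro t
      have hE : ((Real.exp (x₁ - x₂) : ℝ) : ℂ) =
          ((Real.exp (x₁ - t) : ℝ) : ℂ) * ((Real.exp (t - x₂) : ℝ) : ℂ) := by
        rw [← Complex.ofReal_mul, ← Real.exp_add]
        congr 1
        ring
      rw [hE]
      linear_combination ((-(1/2:ℂ)) * ((lam₁:ℂ)^2 + (lam₂:ℂ)^2) *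
        phi lam₁ lam₂ x₁ x₂ t) * Complex.I_sq
    have hD : Integrable (fun t : ℝ => (-(1/2:ℂ)) *
        (((I * (lam₁:ℂ) - I * (lam₂:ℂ) + ((Real.exp (x₁ - t) : ℝ) : ℂ) -
        ((Real.exp (t - x₂) : ℝ) : ℂ)) ^ 2 - ((Real.exp (x₁ - t) : ℝ) : ℂ) -
        ((Real.exp (t - x₂) : ℝ) : ℂ)) * phi lam₁ lam₂ x₁ x₂ t)) := hintc2.const_mul _
    have hE' : Integrable (fun t : ℝ => (I * (lam₁:ℂ)) *
        ((I * (lam₁:ℂ) - I * (lam₂:ℂ) + ((Real.exp (x₁ - t) : ℝ) : ℂ) -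
        ((Real.exp (t - x₂) : ℝ) : ℂ)) * phi lam₁ lam₂ x₁ x₂ t)) := hintc.const_mul _
    rw [integral_congr_ae (Filter.Eventually.of_forall congrstep),
        integral_add hD hE', integral_const_mul, integral_const_mul, hz1, hz2]
    ring
  linear_combination key
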